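/- Let Δ₃⁺(z) = (η(z)η(3z))^{12}. For τ = x + 0.35i with -1/2 ≤ x ≤ 1/2, one has 4.3086×10⁻⁴ < |Δ₃⁺(τ)| < 5.0415×10⁻². -/

import Mathlib

open Complex Real

/-- The Dedekind eta function. -/
noncomputable def dedekindEta (z : ℂ) : ℂ :=
  Complex.exp (2 * (Real.pi : ℂ) * Complex.I * z / 24) *
    ∏' n : ℕ, (1 - Complex.exp (2 * (Real.pi : ℂ) * Complex.I * ((n : ℂ) + 1) * z))

/-- `Δ₃⁺(z) = (η(z)η(3z))^{12}`. -/
noncomputable def Delta3Plus (z : ℂ) : ℂ := (dedekindEta z * dedekindEta (3 * z)) ^ 12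

set_option maxHeartbeats 1600000

namespace Statement5Aux

lemma pair_bound_real {u v ρ : ℝ} (hρ0 : 0 ≤ ρ) (hρ : ρ ≤ 0.1115)
    (hv : 1 - ρ ≤ v) (h : u^2 + v^2 = 2 + 2*ρ^2) :
    u^2*v ≤ 1.1115^2 * 0.8885 := by
  nlinarith [sq_nonneg (v - (1-ρ)), sq_nonneg (v + (1-ρ)), sq_nonneg u, sq_nonneg ρ,
    mul_nonneg hρ0 hρ0, sq_nonneg (ρ - 0.1115), mul_nonneg (mul_nonneg hρ0 hρ0) hρ0]

lemma pair_bound {q : ℂ} (hq : ‖q‖ ≤ 0.1115) :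
    ‖1 - q‖ * ‖1 - q^2‖ ≤ 1.1115^2 * 0.8885 := by
  have h2 : (1 - q^2) = (1-q)*(1+q) := by ring
  rw [h2, norm_mul, ← mul_assoc, ← sq]
  have hpar : ‖1-q‖^2 + ‖1+q‖^2 = 2 + 2*(‖q‖)^2 := by
    simp only [Complex.sq_norm, Complex.normSq_apply, Complex.sub_re, Complex.sub_im,
      Complex.add_re, Complex.add_im, Complex.one_re, Complex.one_im]
    ring
  have hv : 1 - ‖q‖ ≤ ‖1+q‖ := by
    have := norm_sub_norm_le (1 : ℂ) (-q)
    simpa using this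
  exact pair_bound_real (norm_nonneg q) hq hv hpar

lemma abs_one_sub_pos {w : ℂ} (h : ‖w‖ < 1) : 0 < ‖1 - w‖ := by
  have h1 : (1:ℂ) - w ≠ 0 := by
    intro h0
    have : w = 1 := by linear_combination -h0
    rw [this] at h; simp at h
  simpa using h1

lemma log_term_le {w : ℂ} (h : ‖w‖ < 1) :
    Real.log (‖1 - w‖) ≤ ‖w‖ := by
  have h1 : ‖1 - w‖ ≤ 1 + ‖w‖ := by
    calc ‖1 - w‖ ≤ ‖1‖ + ‖w‖ := norm_sub_le 1 w
      _ = 1 + ‖w‖ := by simp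
  calc Real.log (‖1 - w‖) ≤ Real.log (1 + ‖w‖) :=
        Real.log_le_log (abs_one_sub_pos h) h1
    _ ≤ (1 + ‖w‖) - 1 := Real.log_le_sub_one_of_pos (by positivity)
    _ = ‖w‖ := by ring

lemma le_log_term {w : ℂ} {t ρ : ℝ} (hw : ‖w‖ ≤ t) (ht : t ≤ ρ) (hρ : ρ < 1) :
    -(t/(1-ρ)) ≤ Real.log (‖1 - w‖) := by
  have hw1 : ‖w‖ < 1 := lt_of_le_of_lt (hw.trans ht) hρ
  have h1 : 1 - ‖w‖ ≤ ‖1 - w‖ := by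
    have := norm_sub_norm_le (1 : ℂ) w
    simpa using this
  have h2 : 0 < 1 - ‖w‖ := by linarith
  have h0t : 0 ≤ t := le_trans (norm_nonneg w) hw
  calc -(t/(1-ρ)) ≤ -(‖w‖ / (1 - ‖w‖)) := by
        rw [neg_le_neg_iff]
        exact div_le_div₀ h0t hw (by linarith) (by linarith)
    _ ≤ Real.log (1 - ‖w‖) := by
        have h3 := Real.one_sub_inv_le_log_of_pos h2
        have heq : 1 - (1 - ‖w‖)⁻¹ = -(‖w‖ / (1 - ‖w‖)) := by
          field_simp
          ring
        linarith [heq ▸ h3]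
    _ ≤ Real.log (‖1 - w‖) := Real.log_le_log h2 h1

lemma abs_pow_succ_le {c : ℂ} {ρ : ℝ} (hc : ‖c‖ ≤ ρ) (n : ℕ) :
    ‖c^(n+1)‖ ≤ ρ^(n+1) := by
  rw [norm_pow]
  exact pow_le_pow_left₀ (norm_nonneg c) hc (n+1)

lemma summable_clog {c : ℂ} (hc : ‖c‖ ≤ 1/2) :
    Summable (fun n : ℕ => Complex.log (1 - c^(n+1))) := by
  apply Summable.of_norm_bounded (g := fun n => 3/2 * ((1:ℝ)/2) * (‖c‖)^n)
  · apply Summable.mul_left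
    exact summable_geometric_of_lt_one (norm_nonneg c) (lt_of_le_of_lt hc (by norm_num))
  · intro n
    have h1 : ((1:ℂ) - c^(n+1)) = 1 + (-(c^(n+1))) := by ring
    rw [h1]
    have h2 : ‖-(c^(n+1))‖ ≤ 1/2 := by
      rw [norm_neg]
      calc ‖c^(n+1)‖ ≤ (1/2:ℝ)^(n+1) := abs_pow_succ_le hc n
        _ ≤ (1/2:ℝ)^1 := pow_le_pow_of_le_one (by norm_num) (by norm_num) (by omega)
        _ = 1/2 := pow_one _
    calc ‖Complex.log (1 + -(c^(n+1)))‖ ≤ 3/2 * ‖-(c^(n+1))‖ :=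
          Complex.norm_log_one_add_half_le_self h2
      _ ≤ 3/2 * ((1:ℝ)/2) * (‖c‖)^n := by
          rw [norm_neg, norm_pow, pow_succ, mul_assoc]
          have : ‖c‖ ^ n * ‖c‖ ≤ ‖c‖ ^ n * (1/2) := by
            apply mul_le_mul_of_nonneg_left hc (by positivity)
          nlinarith [pow_nonneg (norm_nonneg c) n]

lemma summable_rlog {c : ℂ} (hc : ‖c‖ ≤ 1/2) :
    Summable (fun n : ℕ => Real.log (‖1 - c^(n+1)‖)) := by
  have h := (summable_clog hc).mapL Complex.reCLM
  apply h.congr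
  intro n
  simp [Complex.log_re]

lemma abs_tprod_eq {c : ℂ} (hc : ‖c‖ ≤ 1/2) :
    ‖∏' n : ℕ, (1 - c^(n+1))‖ =
      Real.exp (∑' n : ℕ, Real.log (‖1 - c^(n+1)‖)) := by
  have hne : ∀ n : ℕ, (1:ℂ) - c^(n+1) ≠ 0 := by
    intro n
    have h2 : ‖c^(n+1)‖ < 1 :=
      lt_of_le_of_lt ((abs_pow_succ_le hc n).trans
        (pow_le_pow_of_le_one (by norm_num) (by norm_num) (by omega : 1 ≤ n+1))) (by norm_num)
    intro h0
    have : c^(n+1) = 1 := by linear_combination -h0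
    rw [this] at h2; simp at h2
  have h0 := Complex.cexp_tsum_eq_tprod (f := fun n : ℕ => 1 - c^(n+1)) hne (summable_clog hc)
  rw [← h0, Complex.norm_exp, Complex.re_tsum (summable_clog hc)]
  congr 1
  apply tsum_congr
  intro n
  simp [Complex.log_re]

lemma S_lower {c : ℂ} {ρ : ℝ} (hc : ‖c‖ ≤ ρ) (h0 : 0 ≤ ρ) (hρ : ρ ≤ 1/2) :
    -(ρ/(1-ρ)^2) ≤ ∑' n : ℕ, Real.log (‖1 - c^(n+1)‖) := by
  have hρ1 : ρ < 1 := lt_of_le_of_lt hρ (by norm_num)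
  have hgeo : Summable (fun n : ℕ => ρ^n) := summable_geometric_of_lt_one h0 hρ1
  have key : ∑' n : ℕ, (-(ρ/(1-ρ))) * ρ^n = -(ρ/(1-ρ)^2) := by
    rw [tsum_mul_left, tsum_geometric_of_lt_one h0 hρ1, neg_mul,
      ← div_eq_mul_inv, div_div, ← sq]
  rw [← key]
  apply Summable.tsum_le_tsum _ (hgeo.mul_left _) (summable_rlog (hc.trans hρ))
  intro n
  have h1 : (-(ρ/(1-ρ))) * ρ^n = -(ρ^(n+1)/(1-ρ)) := by rw [pow_succ]; ring
  rw [h1]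
  exact le_log_term (abs_pow_succ_le hc n) (pow_le_of_le_one h0 hρ1.le (by omega)) hρ1

lemma S_upper_plain {c : ℂ} {ρ : ℝ} (hc : ‖c‖ ≤ ρ) (h0 : 0 ≤ ρ) (hρ : ρ ≤ 1/2) :
    (∑' n : ℕ, Real.log (‖1 - c^(n+1)‖)) ≤ ρ/(1-ρ) := by
  have hρ1 : ρ < 1 := lt_of_le_of_lt hρ (by norm_num)
  have hgeo : Summable (fun n : ℕ => ρ^n) := summable_geometric_of_lt_one h0 hρ1
  have key : ∑' n : ℕ, ρ * ρ^n = ρ/(1-ρ) := by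
    rw [tsum_mul_left, tsum_geometric_of_lt_one h0 hρ1, div_eq_mul_inv]
  rw [← key]
  apply Summable.tsum_le_tsum _ (summable_rlog (hc.trans hρ)) (hgeo.mul_left _)
  intro n
  have h2 : ‖c^(n+1)‖ < 1 :=
    lt_of_le_of_lt ((abs_pow_succ_le hc n).trans
      (pow_le_of_le_one h0 hρ1.le (by omega))) hρ1
  calc Real.log (‖1 - c^(n+1)‖) ≤ ‖c^(n+1)‖ := log_term_le h2
    _ ≤ ρ^(n+1) := abs_pow_succ_le hc n
    _ = ρ * ρ^n := by rw [pow_succ]; ring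

lemma S_upper_pair {c : ℂ} (hc : ‖c‖ ≤ 0.1115) :
    (∑' n : ℕ, Real.log (‖1 - c^(n+1)‖)) ≤
      Real.log (1.1115^2 * 0.8885) + 0.1115^3 * (1 - 0.1115)⁻¹ := by
  have hc2 : ‖c‖ ≤ 1/2 := hc.trans (by norm_num)
  have hs := summable_rlog hc2
  rw [← Summable.sum_add_tsum_nat_add 2 hs]
  have habs1 : ‖c^(0+1)‖ < 1 :=
    lt_of_le_of_lt (abs_pow_succ_le hc 0) (by norm_num)
  have habs2 : ‖c^(1+1)‖ < 1 :=
    lt_of_le_of_lt (abs_pow_succ_le hc 1) (by norm_num)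
  have hhead : (∑ i ∈ Finset.range 2, Real.log (‖1 - c^(i+1)‖)) ≤
      Real.log (1.1115^2 * 0.8885) := by
    rw [Finset.sum_range_succ, Finset.sum_range_one]
    have hp1 : 0 < ‖1 - c^(0+1)‖ := abs_one_sub_pos habs1
    have hp2 : 0 < ‖1 - c^(1+1)‖ := abs_one_sub_pos habs2
    rw [← Real.log_mul hp1.ne' hp2.ne']
    refine Real.log_le_log (by positivity) ?_
    show ‖1 - c^1‖ * ‖1 - c^2‖ ≤ 1.1115^2 * 0.8885
    rw [pow_one]
    exact pair_bound hc
  have htail : (∑' n : ℕ, Real.log (‖1 - c^(n+2+1)‖)) ≤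
      0.1115^3 * (1 - 0.1115)⁻¹ := by
    have hst : Summable (fun n : ℕ => Real.log (‖1 - c^(n+2+1)‖)) :=
      (summable_nat_add_iff 2).2 hs
    have key : ∑' n : ℕ, ((0.1115:ℝ)^3 * 0.1115^n) = 0.1115^3 * (1-0.1115)⁻¹ := by
      rw [tsum_mul_left, tsum_geometric_of_lt_one (by norm_num) (by norm_num)]
    rw [← key]
    apply Summable.tsum_le_tsum _ hst
      ((summable_geometric_of_lt_one (by norm_num) (by norm_num)).mul_left _)
    intro n
    have h2 : ‖c^(n+2+1)‖ < 1 :=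
      lt_of_le_of_lt ((abs_pow_succ_le hc (n+2)).trans
        (pow_le_of_le_one (by norm_num : (0:ℝ) ≤ 0.1115) (by norm_num) (by omega))) (by norm_num)
    calc Real.log (‖1 - c^(n+2+1)‖) ≤ ‖c^(n+2+1)‖ := log_term_le h2
      _ ≤ (0.1115:ℝ)^(n+2+1) := abs_pow_succ_le hc (n+2)
      _ = 0.1115^3 * 0.1115^n := by ring
  exact add_le_add hhead htail

lemma exp_quarter (a : ℝ) (h : 0 ≤ a) : (1+a/4)^4 ≤ Real.exp a := by
  have h1 : (a/4) + 1 ≤ Real.exp (a/4) := Real.add_one_le_exp _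
  calc (1+a/4)^4 ≤ (Real.exp (a/4))^4 := by
        apply pow_le_pow_left₀ (by positivity)
        linarith
    _ = Real.exp (((4:ℕ):ℝ)*(a/4)) := by rw [Real.exp_nat_mul]
    _ = Real.exp a := by rw [show ((4:ℕ):ℝ)*(a/4) = a by push_cast; ring]

lemma exp_two_ge : (2.7182818283:ℝ)^2 ≤ Real.exp 2 := by
  calc (2.7182818283:ℝ)^2 ≤ (Real.exp 1)^2 :=
        pow_le_pow_left₀ (by norm_num) Real.exp_one_gt_d9.le 2
    _ = Real.exp ((2:ℕ)*1) := by rw [Real.exp_nat_mul]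
    _ = Real.exp 2 := by norm_num

lemma exp_four_ge : (2.7182818283:ℝ)^4 ≤ Real.exp 4 := by
  calc (2.7182818283:ℝ)^4 ≤ (Real.exp 1)^4 :=
        pow_le_pow_left₀ (by norm_num) Real.exp_one_gt_d9.le 4
    _ = Real.exp ((4:ℕ)*1) := by rw [Real.exp_nat_mul]
    _ = Real.exp 4 := by norm_num

lemma exp_six_le : Real.exp 6 ≤ (2.7182818286:ℝ)^6 := by
  calc Real.exp 6 = Real.exp ((6:ℕ)*1) := by norm_num
    _ = (Real.exp 1)^6 := Real.exp_nat_mul 1 6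
    _ ≤ (2.7182818286:ℝ)^6 := pow_le_pow_left₀ (Real.exp_pos 1).le Real.exp_one_lt_d9.le 6

lemma abs_q_le : Real.exp (-(7*π/10)) ≤ 0.1115 := by
  have hπ : (2.1991144:ℝ) ≤ 7*π/10 := by nlinarith [Real.pi_gt_d6]
  have key : (0.1115:ℝ)⁻¹ ≤ Real.exp (7*π/10) := by
    calc (0.1115:ℝ)⁻¹ ≤ 2.7182818283^2 * ((1:ℝ)+0.1991144/4)^4 := by norm_num
      _ ≤ Real.exp 2 * Real.exp 0.1991144 :=
          mul_le_mul exp_two_ge (exp_quarter _ (by norm_num)) (by positivity) (Real.exp_pos _).le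
      _ = Real.exp (2 + 0.1991144) := (Real.exp_add _ _).symm
      _ = Real.exp 2.1991144 := by norm_num
      _ ≤ Real.exp (7*π/10) := Real.exp_le_exp.2 hπ
  rw [Real.exp_neg]
  calc (Real.exp (7*π/10))⁻¹ ≤ ((0.1115:ℝ)⁻¹)⁻¹ := by
        apply inv_anti₀ (by norm_num) key
    _ = 0.1115 := by norm_num

end Statement5Aux

open Statement5Aux

/-- For `τ = x + 0.35i` with `-1/2 ≤ x ≤ 1/2`,
`4.3086×10⁻⁴ < |Δ₃⁺(τ)| < 5.0415×10⁻²`. -/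
theorem statement5 : ∀ x : ℝ, -(1/2) ≤ x → x ≤ 1/2 →
    0.00043086 < ‖Delta3Plus ((x : ℂ) + 0.35 * Complex.I)‖
    ∧ ‖Delta3Plus ((x : ℂ) + 0.35 * Complex.I)‖ < 0.050415 := by
  intro x _ _
  set z : ℂ := (x:ℂ) + 0.35*I with hz
  set q : ℂ := Complex.exp (2*(π:ℂ)*I*z) with hqdef
  -- rewrite the eta functions
  have heta1 : dedekindEta z = Complex.exp (2 * (π : ℂ) * I * z / 24) *
      ∏' n : ℕ, (1 - q^(n+1)) := by
    rw [dedekindEta]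
    congr 1
    apply tprod_congr
    intro n
    congr 1
    have h : 2 * (π : ℂ) * I * ((n : ℂ) + 1) * z = ((n+1 : ℕ) : ℂ) * (2 * (π : ℂ) * I * z) := by
      push_cast; ring
    rw [h, Complex.exp_nat_mul, hqdef]
  have heta3 : dedekindEta (3*z) = Complex.exp (2 * (π : ℂ) * I * (3*z) / 24) *
      ∏' n : ℕ, (1 - (q^3)^(n+1)) := by
    rw [dedekindEta]
    congr 1
    apply tprod_congr
    intro n
    congr 1
    have h : 2 * (π : ℂ) * I * ((n : ℂ) + 1) * (3*z)
        = ((n+1 : ℕ) : ℂ) * (((3:ℕ):ℂ) * (2 * (π : ℂ) * I * z)) := by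
      push_cast; ring
    rw [h, Complex.exp_nat_mul, Complex.exp_nat_mul, hqdef]
  -- absolute value of q
  have hzre : (2 * (π : ℂ) * I * z).re = -(7*π/10) := by
    rw [hz]
    have h35 : (0.35 : ℂ) = ((0.35 : ℝ) : ℂ) := by norm_num
    rw [h35]
    simp [Complex.mul_re, Complex.mul_im, Complex.add_re, Complex.add_im,
      Complex.I_re, Complex.I_im, Complex.ofReal_re, Complex.ofReal_im]
    norm_num
    ring
  have hq0 : ‖q‖ ≤ 0.1115 := by
    rw [hqdef, Complex.norm_exp, hzre]
    exact abs_q_le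
  have hq2 : ‖q‖ ≤ 1/2 := hq0.trans (by norm_num)
  have hq3 : ‖q^3‖ ≤ 0.0014 := by
    rw [norm_pow]
    calc (‖q‖)^3 ≤ (0.1115:ℝ)^3 :=
          pow_le_pow_left₀ (norm_nonneg q) hq0 3
      _ ≤ 0.0014 := by norm_num
  have hq32 : ‖q^3‖ ≤ 1/2 := hq3.trans (by norm_num)
  -- re of the prefactors
  have hre1 : (2 * (π : ℂ) * I * z / 24).re = -(7*π/240) := by
    rw [hz]
    have h35 : (0.35 : ℂ) = ((0.35 : ℝ) : ℂ) := by norm_num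
    rw [h35]
    simp [Complex.div_re, Complex.mul_re, Complex.mul_im, Complex.add_re, Complex.add_im,
      Complex.I_re, Complex.I_im, Complex.ofReal_re, Complex.ofReal_im, Complex.normSq_apply]
    norm_num
    ring
  have hre3 : (2 * (π : ℂ) * I * (3*z) / 24).re = -(7*π/80) := by
    rw [hz]
    have h35 : (0.35 : ℂ) = ((0.35 : ℝ) : ℂ) := by norm_num
    rw [h35]
    simp [Complex.div_re, Complex.mul_re, Complex.mul_im, Complex.add_re, Complex.add_im,
      Complex.I_re, Complex.I_im, Complex.ofReal_re, Complex.ofReal_im, Complex.normSq_apply]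
    norm_num
    ring
  -- the two log-sums
  set S1 : ℝ := ∑' n : ℕ, Real.log (‖1 - q^(n+1)‖) with hS1
  set S3 : ℝ := ∑' n : ℕ, Real.log (‖1 - (q^3)^(n+1)‖) with hS3
  -- absolute value of Delta3Plus
  have habsD : ‖Delta3Plus z‖ =
      Real.exp (12 * (-(7*π/240) + S1 + (-(7*π/80)) + S3)) := by
    rw [Delta3Plus, norm_pow, norm_mul, heta1, heta3, norm_mul, norm_mul,
      Complex.norm_exp, Complex.norm_exp, hre1, hre3,
      abs_tprod_eq hq2, abs_tprod_eq hq32, ← hS1, ← hS3]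
    rw [← Real.exp_add, ← Real.exp_add, ← Real.exp_add, ← Real.exp_nat_mul]
    congr 1
    push_cast
    ring
  constructor
  · -- lower bound
    have hl1 : -(0.1115/(1-0.1115)^2) ≤ S1 := S_lower hq0 (by norm_num) (by norm_num)
    have hl3 : -(0.0014/(1-0.0014)^2) ≤ S3 := S_lower hq3 (by norm_num) (by norm_num)
    have ht1 : -(0.1115/(1-(0.1115:ℝ))^2) ≥ -0.1412408 := by norm_num
    have ht3 : -(0.0014/(1-(0.0014:ℝ))^2) ≥ -0.0014040 := by norm_num
    have hπ : π < 3.141593 := Real.pi_lt_d6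
    have hE : -6.125 ≤ 12 * (-(7*π/240) + S1 + (-(7*π/80)) + S3) := by nlinarith
    have hlow : Real.exp (-6.125) ≤ ‖Delta3Plus z‖ := by
      rw [habsD]
      exact Real.exp_le_exp.2 hE
    refine lt_of_lt_of_le ?_ hlow
    -- 0.00043086 < exp (-6.125)
    have hup : Real.exp (6.125) ≤ (2.7182818286:ℝ)^6 * (0.875:ℝ)⁻¹ := by
      have h125 : Real.exp (0.125) ≤ (0.875:ℝ)⁻¹ := by
        have h1 : (0.875:ℝ) ≤ Real.exp (-0.125) := by
          have := Real.add_one_le_exp (-0.125:ℝ)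
          linarith
        rw [Real.exp_neg] at h1
        calc Real.exp 0.125 = ((Real.exp 0.125)⁻¹)⁻¹ := by rw [inv_inv]
          _ ≤ (0.875:ℝ)⁻¹ := inv_anti₀ (by norm_num) h1
      calc Real.exp (6.125) = Real.exp 6 * Real.exp 0.125 := by
            rw [← Real.exp_add]; norm_num
        _ ≤ (2.7182818286:ℝ)^6 * (0.875:ℝ)⁻¹ :=
            mul_le_mul exp_six_le h125 (Real.exp_pos _).le (by positivity)
    rw [Real.exp_neg]
    have hpos : (0:ℝ) < (2.7182818286:ℝ)^6 * (0.875:ℝ)⁻¹ := by positivity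
    calc (0.00043086:ℝ) < ((2.7182818286:ℝ)^6 * (0.875:ℝ)⁻¹)⁻¹ := by norm_num
      _ ≤ (Real.exp 6.125)⁻¹ := inv_anti₀ (Real.exp_pos _) hup
  · -- upper bound
    have hu1 : S1 ≤ Real.log (1.1115^2 * 0.8885) + 0.1115^3 * (1 - 0.1115)⁻¹ :=
      S_upper_pair hq0
    have hu3 : S3 ≤ 0.0014/(1-0.0014) := S_upper_plain hq3 (by norm_num) (by norm_num)
    have hs1' : (0.1115:ℝ)^3 * (1 - 0.1115)⁻¹ ≤ 0.0015602 := by norm_num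
    have hs3' : (0.0014:ℝ)/(1-0.0014) ≤ 0.0014020 := by norm_num
    have hπ : (3.141592:ℝ) < π := Real.pi_gt_d6
    have hE : 12 * (-(7*π/240) + S1 + (-(7*π/80)) + S3)
        ≤ -4.3626 + 12 * Real.log (1.1115^2 * 0.8885) := by nlinarith
    rw [habsD]
    calc Real.exp (12 * (-(7*π/240) + S1 + (-(7*π/80)) + S3))
        ≤ Real.exp (-4.3626 + 12 * Real.log (1.1115^2 * 0.8885)) := Real.exp_le_exp.2 hE
      _ = Real.exp (-4.3626) * ((1.1115:ℝ)^2 * 0.8885)^12 := by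
          rw [Real.exp_add]
          congr 1
          rw [show (12:ℝ) * Real.log (1.1115^2 * 0.8885)
              = ((12:ℕ):ℝ) * Real.log (1.1115^2 * 0.8885) by norm_num,
            Real.exp_nat_mul, Real.exp_log (by norm_num)]
      _ < 0.050415 := by
          have hbig : (0:ℝ) < 2.7182818283^4 * 1.3626 := by norm_num
          have hexp : Real.exp (-4.3626) ≤ (2.7182818283^4 * 1.3626:ℝ)⁻¹ := by
            rw [Real.exp_neg]
            apply inv_anti₀ hbig
            calc (2.7182818283:ℝ)^4 * 1.3626 ≤ Real.exp 4 * Real.exp 0.3626 := by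
                  apply mul_le_mul exp_four_ge ?_ (by norm_num) (Real.exp_pos _).le
                  have := Real.add_one_le_exp (0.3626:ℝ)
                  linarith
              _ = Real.exp (4.3626) := by rw [← Real.exp_add]; norm_num
          have hP : (0:ℝ) < ((1.1115:ℝ)^2 * 0.8885)^12 := by positivity
          have hlt : ((1.1115:ℝ)^2 * 0.8885)^12
              < 0.050415 * (2.7182818283^4 * 1.3626) := by norm_num
          have h2 := mul_lt_mul_of_pos_left hlt (inv_pos.2 hbig)
          have h3 : (2.7182818283^4 * 1.3626:ℝ)⁻¹ * (0.050415 * (2.7182818283^4 * 1.3626))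
              = 0.050415 := by field_simp
          have h4 : (2.7182818283^4 * 1.3626:ℝ)⁻¹ * ((1.1115:ℝ)^2 * 0.8885)^12
              < 0.050415 := by rw [← h3]; exact h2
          exact lt_of_le_of_lt (mul_le_mul_of_nonneg_right hexp hP.le) h4
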